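/- Let Ω ⊆ ℝ^{2n} be a compact convex set, symmetric about the origin (Ω = −Ω), with 0 in its interior, and let ℓ ⊆ ℝ^{2n} be a linear subspace. For Y ⊆ ℝ^{2n} and a linear subspace m ⊆ ℝ^{2n}, write Y^{ℏ,ω,m} := {z' ∈ m : ω(z,z') ≤ ℏ for all z ∈ Y} for the symplectic ℏ-polar dual taken inside m, and let Π_m denote the orthogonal projection onto m. Then (Ω ∩ ℓ)^{ℏ,ω,Jℓ} = Π_{Jℓ}(Ω^{ℏ,ω}) and (Π_{Jℓ} Ω)^{ℏ,ω,ℓ} = Ω^{ℏ,ω} ∩ ℓ, where Jℓ denotes the image of ℓ under J (which is the orthogonal complement of ℓ when ℓ is Lagrangian). -/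

import Mathlib

open Set RealInnerProductSpace

noncomputable section

/-- The standard symplectic matrix `J = [[0, I],[-I, 0]]` on `ℝ²ⁿ = ℝⁿ ⊕ ℝⁿ`. -/
def Jmat (n : ℕ) : Matrix (Fin n ⊕ Fin n) (Fin n ⊕ Fin n) ℝ :=
  Matrix.fromBlocks 0 1 (-1) 0

/-- `J` as a linear map on the Euclidean phase space `ℝ²ⁿ`. -/
def Jlin (n : ℕ) :
    EuclideanSpace ℝ (Fin n ⊕ Fin n) →ₗ[ℝ] EuclideanSpace ℝ (Fin n ⊕ Fin n) :=
  (WithLp.linearEquiv 2 ℝ ((Fin n ⊕ Fin n) → ℝ)).symm.toLinearMap ∘ₗ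
    Matrix.toLin' (Jmat n) ∘ₗ
      (WithLp.linearEquiv 2 ℝ ((Fin n ⊕ Fin n) → ℝ)).toLinearMap

/-- The standard symplectic form `ω(z,z') = (Jz)·z'`. -/
def symplFormE {n : ℕ} (z z' : EuclideanSpace ℝ (Fin n ⊕ Fin n)) : ℝ :=
  ⟪Jlin n z, z'⟫

/-- The symplectic ℏ-polar dual `Ω^{ℏ,ω} = {z' : ω(z,z') ≤ ℏ ∀ z ∈ Ω}`. -/
def symplDualE {n : ℕ} (ℏ : ℝ) (Ω : Set (EuclideanSpace ℝ (Fin n ⊕ Fin n))) :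
    Set (EuclideanSpace ℝ (Fin n ⊕ Fin n)) :=
  {z' | ∀ z ∈ Ω, symplFormE z z' ≤ ℏ}

/-- The symplectic ℏ-polar dual taken inside a subspace `m`:
`Y^{ℏ,ω,m} = {z' ∈ m : ω(z,z') ≤ ℏ ∀ z ∈ Y}`. -/
def symplDualIn {n : ℕ} (ℏ : ℝ) (m : Submodule ℝ (EuclideanSpace ℝ (Fin n ⊕ Fin n)))
    (Y : Set (EuclideanSpace ℝ (Fin n ⊕ Fin n))) :
    Set (EuclideanSpace ℝ (Fin n ⊕ Fin n)) :=
  {z' | z' ∈ m ∧ ∀ z ∈ Y, symplFormE z z' ≤ ℏ}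

lemma Jlin_apply_inl {n : ℕ} (z : EuclideanSpace ℝ (Fin n ⊕ Fin n)) (i : Fin n) :
    Jlin n z (Sum.inl i) = z (Sum.inr i) := by
  simp [Jlin, Jmat, Matrix.toLin'_apply, Matrix.fromBlocks_mulVec, Matrix.zero_mulVec,
    Matrix.one_mulVec, Matrix.neg_mulVec]

lemma Jlin_apply_inr {n : ℕ} (z : EuclideanSpace ℝ (Fin n ⊕ Fin n)) (i : Fin n) :
    Jlin n z (Sum.inr i) = - z (Sum.inl i) := by
  simp [Jlin, Jmat, Matrix.toLin'_apply, Matrix.fromBlocks_mulVec, Matrix.zero_mulVec,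
    Matrix.one_mulVec, Matrix.neg_mulVec]

lemma Jlin_inner {n : ℕ} (x y : EuclideanSpace ℝ (Fin n ⊕ Fin n)) :
    ⟪Jlin n x, Jlin n y⟫ = ⟪x, y⟫ := by
  simp only [PiLp.inner_apply, RCLike.inner_apply, conj_trivial, Fintype.sum_sum_type,
    Jlin_apply_inl, Jlin_apply_inr]
  rw [add_comm]
  ring_nf

lemma Jlin_skew {n : ℕ} (x y : EuclideanSpace ℝ (Fin n ⊕ Fin n)) :
    ⟪Jlin n x, y⟫ = -⟪x, Jlin n y⟫ := by
  simp only [PiLp.inner_apply, RCLike.inner_apply, conj_trivial, Fintype.sum_sum_type,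
    Jlin_apply_inl, Jlin_apply_inr]
  simp only [neg_add, ← Finset.sum_neg_distrib]
  rw [add_comm]
  congr 1 <;> apply Finset.sum_congr rfl <;> intros <;> ring

lemma Jlin_Jlin {n : ℕ} (z : EuclideanSpace ℝ (Fin n ⊕ Fin n)) :
    Jlin n (Jlin n z) = -z := by
  ext i
  cases i with
  | inl i => simp [Jlin_apply_inl, Jlin_apply_inr]
  | inr i => simp [Jlin_apply_inl, Jlin_apply_inr]

def Jequiv (n : ℕ) :
    EuclideanSpace ℝ (Fin n ⊕ Fin n) ≃ₗ[ℝ] EuclideanSpace ℝ (Fin n ⊕ Fin n) :=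
  { Jlin n with
    invFun := fun z => -(Jlin n z)
    left_inv := fun z => by show -(Jlin n (Jlin n z)) = z; rw [Jlin_Jlin, neg_neg]
    right_inv := fun z => by show Jlin n (-(Jlin n z)) = z; rw [map_neg, Jlin_Jlin, neg_neg] }

variable {E : Type*} [NormedAddCommGroup E] [InnerProductSpace ℝ E] [FiniteDimensional ℝ E]

lemma proj_inner (m : Submodule ℝ E) {w : E} (hw : w ∈ m) (z : E) :
    ⟪(Submodule.orthogonalProjectionOnto m z : E), w⟫ = ⟪z, w⟫ := by
  rw [← Submodule.starProjection_apply, Submodule.inner_starProjection_left_eq_right,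
    Submodule.starProjection_eq_self_iff.mpr hw]

lemma polar_section_eq_proj_polar (ℏ : ℝ) (hℏ : 0 < ℏ) (Ω : Set E)
    (hconv : Convex ℝ Ω) (h0 : (0:E) ∈ interior Ω) (m : Submodule ℝ E) :
    {w | w ∈ m ∧ ∀ z ∈ Ω ∩ m, ⟪z, w⟫ ≤ ℏ}
      = (fun z => (Submodule.orthogonalProjectionOnto m z : E)) '' {w | ∀ z ∈ Ω, ⟪z, w⟫ ≤ ℏ} := by
  have habs : Absorbent ℝ Ω := absorbent_nhds_zero (mem_interior_iff_mem_nhds.mp h0)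
  apply Set.Subset.antisymm
  · rintro w ⟨hwm, hw⟩
    -- Hahn-Banach extension
    set φ : m →ₗ[ℝ] ℝ := (innerSL ℝ w).toLinearMap.comp m.subtype with hφ
    have hf : ∀ x : m, φ x ≤ ℏ * gauge Ω (x : E) := by
      intro x
      have key : ∀ ε > 0, φ x ≤ ℏ * gauge Ω (x : E) + ε := by
        intro ε hε
        obtain ⟨b, hb0, hblt, y, hy, hzy⟩ := exists_lt_of_gauge_lt habs
          (show gauge Ω (x : E) < gauge Ω (x : E) + ε / ℏ by
            linarith [div_pos hε hℏ])
        have hym : y ∈ (m : Set E) := by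
          have : y = b⁻¹ • (x : E) := by
            rw [← hzy, smul_smul, inv_mul_cancel₀ hb0.ne', one_smul]
          rw [this]; exact m.smul_mem _ x.2
        have hyb : ⟪y, w⟫ ≤ ℏ := hw y ⟨hy, hym⟩
        have : φ x = b * ⟪y, w⟫ := by
          simp only [hφ, LinearMap.comp_apply, ContinuousLinearMap.coe_coe,
            Submodule.subtype_apply, innerSL_apply_apply]
          rw [← hzy, real_inner_smul_right, real_inner_comm]
        rw [this]
        calc b * ⟪y, w⟫ ≤ b * ℏ := by
              exact mul_le_mul_of_nonneg_left hyb hb0.le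
          _ ≤ (gauge Ω (x : E) + ε / ℏ) * ℏ := by
              exact mul_le_mul_of_nonneg_right hblt.le hℏ.le
          _ = ℏ * gauge Ω (x : E) + ε := by field_simp
      by_contra h
      push_neg at h
      have := key ((φ x - ℏ * gauge Ω (x : E)) / 2) (by linarith)
      linarith
    obtain ⟨g, hg_eq, hg_le⟩ := exists_extension_of_le_sublinear ⟨m, φ⟩
      (fun z => ℏ * gauge Ω z)
      (fun c hc x => by
        show ℏ * gauge Ω (c • x) = c * (ℏ * gauge Ω x)
        rw [gauge_smul_of_nonneg hc.le, smul_eq_mul]; ring)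
      (fun x y => by
        show ℏ * gauge Ω (x + y) ≤ ℏ * gauge Ω x + ℏ * gauge Ω y
        nlinarith [gauge_add_le hconv habs x y, gauge_nonneg (s := Ω) (x := x)])
      hf
    set u : E := (InnerProductSpace.toDual ℝ E).symm (LinearMap.toContinuousLinearMap g)
      with hu_def
    have hu_inner : ∀ z : E, ⟪u, z⟫ = g z := by
      intro z
      simp [hu_def, InnerProductSpace.toDual_symm_apply]
    refine ⟨u, fun z hz => ?_, ?_⟩
    · rw [real_inner_comm, hu_inner]
      calc g z ≤ ℏ * gauge Ω z := hg_le z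
        _ ≤ ℏ * 1 := mul_le_mul_of_nonneg_left (gauge_le_one_of_mem hz) hℏ.le
        _ = ℏ := mul_one ℏ
    · have : u - w ∈ mᗮ := by
        rw [Submodule.mem_orthogonal]
        intro z hz
        rw [inner_sub_right]
        have h1 : ⟪z, u⟫ = g z := by rw [real_inner_comm]; exact hu_inner z
        have h2 : g z = ⟪w, z⟫ := by
          have := hg_eq ⟨z, hz⟩
          simpa [hφ] using this
        rw [h1, h2, real_inner_comm w z, sub_self]
      exact Submodule.eq_starProjection_of_mem_orthogonal hwm this
  · rintro _ ⟨u, hu, rfl⟩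
    refine ⟨Submodule.coe_mem _, fun z hz => ?_⟩
    rw [real_inner_comm]
    show ⟪m.starProjection u, z⟫ ≤ ℏ
    rw [Submodule.inner_starProjection_left_eq_right,
      Submodule.starProjection_eq_self_iff.mpr hz.2, real_inner_comm]
    exact hu z hz.1

/-- for a compact, convex, centrally symmetric body `Ω ⊆ ℝ²ⁿ` with `0`
in its interior and a linear subspace `ℓ ⊆ ℝ²ⁿ`, one has
`(Ω ∩ ℓ)^{ℏ,ω,Jℓ} = Π_{Jℓ}(Ω^{ℏ,ω})` and `(Π_{Jℓ} Ω)^{ℏ,ω,ℓ} = Ω^{ℏ,ω} ∩ ℓ`,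
where `Jℓ` is the image of `ℓ` under `J` and `Π_m` is the orthogonal projection
onto `m`. -/
theorem symplectic_polar_duality_exchanges_sections_and_projections
    {n : ℕ} (ℏ : ℝ) (hℏ : 0 < ℏ)
    (Ω : Set (EuclideanSpace ℝ (Fin n ⊕ Fin n)))
    (hΩc : IsCompact Ω) (hΩconv : Convex ℝ Ω) (hΩsymm : Ω = -Ω)
    (hΩ0 : (0 : EuclideanSpace ℝ (Fin n ⊕ Fin n)) ∈ interior Ω)
    (ℓ : Submodule ℝ (EuclideanSpace ℝ (Fin n ⊕ Fin n))) :
    symplDualIn ℏ (ℓ.map (Jlin n)) (Ω ∩ ℓ)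
        = (fun z => (Submodule.orthogonalProjectionOnto (ℓ.map (Jlin n)) z :
            EuclideanSpace ℝ (Fin n ⊕ Fin n))) '' symplDualE ℏ Ω
    ∧ symplDualIn ℏ ℓ
          ((fun z => (Submodule.orthogonalProjectionOnto (ℓ.map (Jlin n)) z :
            EuclideanSpace ℝ (Fin n ⊕ Fin n))) '' Ω)
        = symplDualE ℏ Ω ∩ ℓ := by
  classical
  have hJinj : Function.Injective (Jlin n) := by
    intro x y hxy
    have h2 := congrArg (Jlin n) hxy
    rw [Jlin_Jlin, Jlin_Jlin] at h2
    exact neg_injective h2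
  constructor
  · -- Statement 1
    have himg : (Jlin n) '' (Ω ∩ ℓ) = ((Jlin n) '' Ω) ∩ (ℓ.map (Jlin n) : Set _) := by
      rw [Set.image_inter hJinj, Submodule.map_coe]
    have h0' : (0 : EuclideanSpace ℝ (Fin n ⊕ Fin n)) ∈ interior ((Jlin n) '' Ω) := by
      have he := (Jequiv n).toContinuousLinearEquiv.toHomeomorph.image_interior Ω
      have hc : ⇑(Jequiv n).toContinuousLinearEquiv.toHomeomorph = ⇑(Jlin n) := rfl
      rw [hc] at he
      rw [← he]
      exact ⟨0, hΩ0, map_zero _⟩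
    have hconv' : Convex ℝ ((Jlin n) '' Ω) := hΩconv.linear_image (Jlin n)
    have key := polar_section_eq_proj_polar ℏ hℏ ((Jlin n) '' Ω) hconv' h0' (ℓ.map (Jlin n))
    have e1 : symplDualIn ℏ (ℓ.map (Jlin n)) (Ω ∩ ℓ)
        = {w | w ∈ ℓ.map (Jlin n) ∧ ∀ z ∈ ((Jlin n) '' Ω) ∩ (ℓ.map (Jlin n) : Set _), ⟪z, w⟫ ≤ ℏ} := by
      ext w
      simp only [symplDualIn, mem_setOf_eq, ← himg, Set.forall_mem_image]
      rfl
    have e2 : {w | ∀ z ∈ ((Jlin n) '' Ω), ⟪z, w⟫ ≤ ℏ} = symplDualE ℏ Ω := by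
      ext w
      simp only [mem_setOf_eq, Set.forall_mem_image]
      rfl
    rw [e1, key, e2]
  · -- Statement 2
    have keyeq : ∀ z' ∈ ℓ, ∀ z : EuclideanSpace ℝ (Fin n ⊕ Fin n),
        symplFormE ((Submodule.orthogonalProjectionOnto (ℓ.map (Jlin n)) z :
          EuclideanSpace ℝ (Fin n ⊕ Fin n))) z' = symplFormE z z' := by
      intro z' hz' z
      have hJz' : Jlin n z' ∈ ℓ.map (Jlin n) := Submodule.mem_map_of_mem hz'
      show ⟪Jlin n ((Submodule.orthogonalProjectionOnto (ℓ.map (Jlin n)) z :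
          EuclideanSpace ℝ (Fin n ⊕ Fin n))), z'⟫ = ⟪Jlin n z, z'⟫
      rw [Jlin_skew, proj_inner _ hJz' z, ← Jlin_skew]
    ext z'
    simp only [symplDualIn, mem_setOf_eq, Set.mem_inter_iff, Set.forall_mem_image,
      SetLike.mem_coe, symplDualE]
    constructor
    · rintro ⟨hz'ℓ, h⟩
      refine ⟨fun z hz => ?_, hz'ℓ⟩
      rw [← keyeq z' hz'ℓ z]
      exact h hz
    · rintro ⟨h, hz'ℓ⟩
      exact ⟨hz'ℓ, fun z hz => by rw [keyeq z' hz'ℓ z]; exact h z hz⟩
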